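/- arXiv:1402.5122 — 3 statements merged into one kernel-verified Lean document; each statement's English description precedes it below -/
import Mathlib

section
/- Let A be a finite-dimensional algebra over a field K with ideal N such that N is nilpotent, A/N is split, and let L be a field extension of K. Then Jac(L ⊗_K A) = L ⊗_K Jac(A), i.e., the Jacobson radical of a finite-dimensional split algebra is stable under scalar extension of the base field. -/
open TensorProduct

/-- A `K`-algebra `A` is split if the endomorphisms of every simple `A`-module are just the
scalars from `K`. -/
def IsSplit (K : Type) (A : Type) [CommRing K] [Ring A] [Algebra K A] : Prop :=
  ∀ (S : Type) (_ : AddCommGroup S) (_ : Module A S), IsSimpleModule A S →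
    ∀ f : S →ₗ[A] S, ∃ c : K, ∀ x : S, f x = algebraMap K A c • x


open TensorProduct

section QuasiReg
variable {A : Type*} [Ring A]

lemma mem_jac_of_mul_nilpotent {x : A} (h : ∀ y : A, IsNilpotent (y * x)) :
    x ∈ Ideal.jacobson (⊥ : Ideal A) := by
  rw [Ideal.mem_jacobson_iff]
  intro y
  obtain ⟨v, hv⟩ := (h y).isUnit_one_add
  refine ⟨(↑v⁻¹ : A), ?_⟩
  have : (↑v⁻¹ : A) * (1 + y * x) = 1 := by rw [← hv, Units.inv_mul]
  simp only [Ideal.mem_bot]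
  calc (↑v⁻¹ : A) * y * x + ↑v⁻¹ - 1
      = (↑v⁻¹ : A) * (1 + y * x) - 1 := by noncomm_ring
    _ = 0 := by rw [this, sub_self]

lemma jac_mul_mem_right {x y : A} (hx : x ∈ Ideal.jacobson (⊥ : Ideal A)) :
    x * y ∈ Ideal.jacobson (⊥ : Ideal A) :=
  Ideal.mul_mem_right y _ hx

end QuasiReg
section Nil
variable {A : Type*} [Ring A]

/-- `T n` : the left ideal spanned by products of `n+1` elements of the Jacobson radical. -/
private def Tpow (A : Type*) [Ring A] (n : ℕ) : Ideal A :=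
  Submodule.span A {x | ∃ l : List A, l.length = n + 1 ∧
    (∀ y ∈ l, y ∈ Ideal.jacobson (⊥ : Ideal A)) ∧ x = l.prod}

private lemma Tpow_le_jac (n : ℕ) : Tpow A n ≤ Ideal.jacobson (⊥ : Ideal A) := by
  rw [Tpow, Submodule.span_le]
  rintro x ⟨l, hlen, hmem, rfl⟩
  cases l with
  | nil => simp at hlen
  | cons y l' =>
    have hy : y ∈ Ideal.jacobson (⊥ : Ideal A) := hmem y List.mem_cons_self
    rw [List.prod_cons]
    exact SetLike.mem_coe.mpr (jac_mul_mem_right hy)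

private lemma Tpow_antitone : ∀ n : ℕ, Tpow A (n + 1) ≤ Tpow A n := by
  intro n
  rw [Tpow, Submodule.span_le]
  rintro x ⟨l, hlen, hmem, rfl⟩
  cases l with
  | nil => simp at hlen
  | cons y l' =>
    rw [List.prod_cons]
    have : l'.prod ∈ Tpow A n :=
      Submodule.subset_span ⟨l', by simpa using hlen, fun z hz => hmem z (List.mem_cons_of_mem _ hz), rfl⟩
    exact SetLike.mem_coe.mpr (Submodule.smul_mem _ y this)

/-- Right multiplication stability of `Tpow`. -/
private lemma Tpow_mul_mem_right {n : ℕ} {x : A} (hx : x ∈ Tpow A n) (a : A) :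
    x * a ∈ Tpow A n := by
  induction hx using Submodule.span_induction with
  | mem x hx =>
    obtain ⟨l, hlen, hmem, rfl⟩ := hx
    rcases l.eq_nil_or_concat with rfl | ⟨l', y, rfl⟩
    · simp at hlen
    · simp only [List.concat_eq_append] at hlen hmem ⊢
      refine Submodule.subset_span ⟨l' ++ [y * a], by simpa using hlen, ?_, ?_⟩
      · intro z hz
        rcases List.mem_append.mp hz with hz | hz
        · exact hmem z (List.mem_append.mpr (Or.inl hz))
        · simp only [List.mem_singleton] at hz
          subst hz
          exact jac_mul_mem_right (hmem y (by simp))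
      · simp [List.prod_append, mul_assoc]
  | zero => simpa using (Tpow A n).zero_mem
  | add x y _ _ hx hy => simpa [add_mul] using (Tpow A n).add_mem hx hy
  | smul c x _ hx => simpa [smul_eq_mul, mul_assoc] using (Tpow A n).smul_mem c hx

/-- product of elements of `Tpow a` and `Tpow b` lands in `Tpow (a+b+1)`. -/
private lemma Tpow_mul_mem {a b : ℕ} {q : A} (hq : q ∈ Tpow A b) :
    ∀ p ∈ Tpow A a, p * q ∈ Tpow A (a + b + 1) := by
  induction hq using Submodule.span_induction with
  | mem h hh =>
    obtain ⟨lh, hlen, hmem, rfl⟩ := hh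
    intro p hp
    induction hp using Submodule.span_induction with
    | mem g hg =>
      obtain ⟨lg, glen, gmem, rfl⟩ := hg
      refine Submodule.subset_span ⟨lg ++ lh, by simp [glen, hlen]; omega, ?_, by
        simp [List.prod_append]⟩
      intro z hz
      rcases List.mem_append.mp hz with hz | hz
      exacts [gmem z hz, hmem z hz]
    | zero => simpa using (Tpow A _).zero_mem
    | add x y _ _ hx hy => simpa [add_mul] using (Tpow A _).add_mem hx hy
    | smul c x _ hx => simpa [smul_eq_mul, mul_assoc] using (Tpow A _).smul_mem c hx
  | zero => intro p _; simpa using (Tpow A _).zero_mem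
  | add x y _ _ hx hy => intro p hp; simpa [mul_add] using (Tpow A _).add_mem (hx p hp) (hy p hp)
  | smul c x _ hx =>
    intro p hp
    have : p * (c • x) = (p * c) * x := by
      simp [smul_eq_mul, mul_assoc]
    rw [this]
    exact hx _ (Tpow_mul_mem_right hp c)

theorem jac_nilpotent (A : Type*) [Ring A] [IsArtinianRing A] :
    ∃ n : ℕ, 0 < n ∧ ∀ l : List A, l.length = n →
      (∀ x ∈ l, x ∈ Ideal.jacobson (⊥ : Ideal A)) → l.prod = 0 := by
  classical
  -- stabilization of the chain
  have anti : ∀ {m k : ℕ}, m ≤ k → Tpow A k ≤ Tpow A m := by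
    intro m k h
    induction h with
    | refl => exact le_rfl
    | step h ih => exact le_trans (Tpow_antitone _) ih
  obtain ⟨n, hn⟩ := IsArtinian.monotone_stabilizes
    (⟨fun k => OrderDual.toDual (Tpow A k), fun i j hij => anti hij⟩ : ℕ →o (Ideal A)ᵒᵈ)
  set M := Tpow A n with hM
  have hstab : ∀ m, n ≤ m → Tpow A m = M := fun m hm => (congrArg OrderDual.ofDual (hn m hm)).symm
  -- M * M = M
  have hMM : ∀ x ∈ M, ∀ y ∈ M, x * y ∈ M := by
    intro x hx y hy
    have := Tpow_mul_mem (A := A) (a := n) (b := n) hy x hx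
    rwa [hstab (n + n + 1) (by omega)] at this
  have hMM' : M ≤ Submodule.span A {x | ∃ p ∈ M, ∃ q ∈ M, x = p * q} := by
    have e : M = Tpow A (2 * n + 1) := (hstab (2 * n + 1) (by omega)).symm
    nth_rewrite 1 [e]
    rw [Tpow, Submodule.span_le]
    rintro x ⟨l, hlen, hmem, rfl⟩
    have h1 : (l.take (n + 1)).prod ∈ M := by
      refine (hstab n le_rfl) ▸ Submodule.subset_span ⟨l.take (n + 1), ?_, ?_, rfl⟩
      · rw [List.length_take]; omega
      · exact fun z hz => hmem z (List.mem_of_mem_take hz)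
    have h2 : (l.drop (n + 1)).prod ∈ M := by
      refine (hstab n le_rfl) ▸ Submodule.subset_span ⟨l.drop (n + 1), ?_, ?_, rfl⟩
      · rw [List.length_drop]; omega
      · exact fun z hz => hmem z (List.mem_of_mem_drop hz)
    have hsplit : l.prod = (l.take (n + 1)).prod * (l.drop (n + 1)).prod := by
      rw [← List.prod_append, List.take_append_drop]
    rw [hsplit]
    exact Submodule.subset_span ⟨_, h1, _, h2, rfl⟩
  -- Nakayama-style argument: M = ⊥
  have hMbot : M = ⊥ := by
    by_contra hMne
    set 𝒮 : Set (Ideal A) := {I | Submodule.span A {x | ∃ p ∈ M, ∃ q ∈ I, x = p * q} ≠ ⊥} with h𝒮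
    have hMS : M ∈ 𝒮 := by
      intro h
      exact hMne (le_bot_iff.mp (le_trans hMM' (le_of_eq h)))
    obtain ⟨I₀, hI₀, hmin⟩ := IsArtinian.set_has_minimal 𝒮 ⟨M, hMS⟩
    -- find x ∈ I₀ with M x ≠ ⊥
    have : ∃ x ∈ I₀, ∃ m ∈ M, m * x ≠ 0 := by
      by_contra h
      push_neg at h
      apply hI₀
      rw [← le_bot_iff, Submodule.span_le]
      rintro y ⟨p, hp, q, hq, rfl⟩
      simpa using h q hq p hp
    obtain ⟨x, hxI, m₁, hm₁, hm₁x⟩ := this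
    set Mx : Ideal A := Submodule.map (LinearMap.toSpanSingleton A A x) M with hMx
    have hMxne : Mx ≠ ⊥ := by
      intro h
      apply hm₁x
      have : m₁ * x ∈ Mx := ⟨m₁, hm₁, by simp [LinearMap.toSpanSingleton_apply, smul_eq_mul]⟩
      rw [h] at this; simpa using this
    have hMxle : Mx ≤ I₀ := by
      rintro y ⟨m, hm, rfl⟩
      simpa [LinearMap.toSpanSingleton_apply] using I₀.smul_mem m hxI
    have hMxS : Mx ∈ 𝒮 := by
      intro h
      apply hMxne
      rw [← le_bot_iff]
      intro y hy
      rw [← h]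
      obtain ⟨m, hm, rfl⟩ := hy
      have hm' : m ∈ Submodule.span A {x | ∃ p ∈ M, ∃ q ∈ M, x = p * q} := hMM' hm
      simp only [LinearMap.toSpanSingleton_apply, smul_eq_mul]
      clear hm
      induction hm' using Submodule.span_induction with
      | mem w hw =>
        obtain ⟨p, hp, q, hq, rfl⟩ := hw
        rw [mul_assoc]
        exact Submodule.subset_span ⟨p, hp, q * x, ⟨q, hq, by simp [LinearMap.toSpanSingleton_apply, smul_eq_mul]⟩, rfl⟩
      | zero => simpa using Submodule.zero_mem _
      | add u v _ _ hu hv => simpa [add_mul] using Submodule.add_mem _ hu hv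
      | smul c u _ hu => simpa [smul_eq_mul, mul_assoc] using Submodule.smul_mem _ c hu
    have hEq : Mx = I₀ := by
      rcases lt_or_eq_of_le hMxle with h | h
      · exact absurd h (hmin Mx hMxS)
      · exact h
    have hx : x ∈ Mx := hEq ▸ hxI
    obtain ⟨m₀, hm₀, hm₀x⟩ := hx
    simp only [LinearMap.toSpanSingleton_apply, smul_eq_mul] at hm₀x
    -- m₀ ∈ jacobson ⊥, so 1 - m₀ is left invertible
    have hm₀J : m₀ ∈ Ideal.jacobson (⊥ : Ideal A) := Tpow_le_jac n hm₀
    obtain ⟨z, hz⟩ := Ideal.mem_jacobson_iff.mp hm₀J (-1)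
    rw [Ideal.mem_bot] at hz
    have hz1 : z * (1 - m₀) = 1 := by
      have : z * -1 * m₀ + z - 1 = z * (1 - m₀) - 1 := by noncomm_ring
      rw [this] at hz
      linear_combination (norm := noncomm_ring) hz
    have hx0 : x = 0 := by
      have h1 : (1 - m₀) * x = 0 := by rw [sub_mul, one_mul, hm₀x, sub_self]
      calc x = 1 * x := (one_mul x).symm
        _ = z * (1 - m₀) * x := by rw [hz1]
        _ = z * ((1 - m₀) * x) := by rw [mul_assoc]
        _ = 0 := by rw [h1, mul_zero]
    apply hm₁x
    rw [hx0, mul_zero]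
  refine ⟨n + 1, Nat.succ_pos n, fun l hlen hmem => ?_⟩
  have : l.prod ∈ M := Submodule.subset_span ⟨l, hlen, hmem, rfl⟩
  rw [hMbot] at this
  simpa using this

section Density
variable {K A V : Type*} [Field K] [Ring A] [Algebra K A]
  [AddCommGroup V] [Module A V] [Module K V] [IsScalarTower K A V]

lemma density_aux [IsSimpleModule A V]
    (hEnd : ∀ f : V →ₗ[A] V, ∃ c : K, ∀ x, f x = c • x) :
    ∀ (n : ℕ) (v : Fin n → V), LinearIndependent K v →
      ∀ w : Fin n → V, ∃ a : A, ∀ i, a • v i = w i := by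
  classical
  intro n
  induction n with
  | zero => exact fun v _ w => ⟨0, fun i => i.elim0⟩
  | succ n ih =>
    intro v hv w
    have key : ∀ j : Fin (n + 1), ∃ a : A, a • v j = w j ∧ ∀ i, i ≠ j → a • v i = 0 := by
      intro j
      set u : Fin n → V := v ∘ j.succAbove with hu
      have hui : LinearIndependent K u := hv.comp _ Fin.succAbove_right_injective
      by_cases hW : ∀ a : A, (∀ k, a • u k = 0) → a • v j = 0
      · exfalso
        have hex : ∀ (i : Fin n) (x : V), ∃ a : A, ∀ k : Fin n, a • u k = (Pi.single i x : Fin n → V) k :=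
          fun i x => ih u hui (Pi.single i x)
        choose g hg using hex
        have keyeq : ∀ (a a' : A), (∀ k, a • u k = a' • u k) → a • v j = a' • v j := by
          intro a a' h
          have h0 := hW (a - a') (fun k => by rw [sub_smul, h k, sub_self])
          rw [sub_smul] at h0
          exact sub_eq_zero.mp h0
        have hf : ∀ i : Fin n, ∃ c : K, ∀ x : V, g i x • v j = c • x := by
          intro i
          obtain ⟨c, hc⟩ := hEnd
            { toFun := fun x => g i x • v j
              map_add' := fun x y => by
                have h1 : ∀ k, g i (x + y) • u k = (g i x + g i y) • u k := by
                  intro k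
                  rw [add_smul, hg, hg, hg, Pi.single_add]
                  simp
                show g i (x + y) • v j = g i x • v j + g i y • v j
                rw [keyeq _ _ h1, add_smul]
              map_smul' := fun a x => by
                have h1 : ∀ k, g i (a • x) • u k = (a * g i x) • u k := by
                  intro k
                  rw [mul_smul, hg, hg, Pi.single_smul]
                  simp
                show g i (a • x) • v j = a • (g i x • v j)
                rw [keyeq _ _ h1, mul_smul] }
          exact ⟨c, fun x => hc x⟩
        choose c hc using hf
        set b : A := ∑ i : Fin n, g i (u i) with hb
        have hbu : ∀ k, b • u k = u k := by
          intro k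
          rw [hb, Finset.sum_smul]
          have h1 : ∀ i ∈ Finset.univ, g i (u i) • u k = (Pi.single i (u i) : Fin n → V) k :=
            fun i _ => hg i (u i) k
          rw [Finset.sum_congr rfl h1, ← Finset.sum_apply k Finset.univ (fun i => Pi.single i (u i)),
            Finset.univ_sum_single]
        have hvj : v j = ∑ i : Fin n, c i • u i := by
          have h1 := hW (1 - b) (fun k => by rw [sub_smul, one_smul, hbu, sub_self])
          rw [sub_smul, one_smul] at h1
          have h2 : v j = b • v j := sub_eq_zero.mp h1
          rw [h2, hb, Finset.sum_smul]
          exact Finset.sum_congr rfl fun i _ => hc i (u i)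
        have hns := hv.notMem_span_image (s := {j}ᶜ) (x := j) (by simp)
        apply hns
        rw [hvj]
        refine Submodule.sum_mem _ fun i _ => Submodule.smul_mem _ _ (Submodule.subset_span ?_)
        exact ⟨j.succAbove i, by simp [Fin.succAbove_ne], rfl⟩
      · push_neg at hW
        obtain ⟨a₀, ha₀u, ha₀vj⟩ := hW
        set Wvj : Submodule A V := Submodule.map (LinearMap.toSpanSingleton A V (v j))
          (⨅ k, LinearMap.ker (LinearMap.toSpanSingleton A V (u k))) with hWvj
        have hmem : ∀ y : V, y ∈ Wvj ↔ ∃ a : A, (∀ k, a • u k = 0) ∧ a • v j = y := by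
          intro y
          constructor
          · rintro ⟨a, ha, rfl⟩
            refine ⟨a, fun k => ?_, rfl⟩
            have := (Submodule.mem_iInf _).mp ha k
            simpa [LinearMap.toSpanSingleton_apply] using this
          · rintro ⟨a, h1, rfl⟩
            refine ⟨a, (Submodule.mem_iInf _).mpr fun k => ?_, rfl⟩
            simpa [LinearMap.mem_ker, LinearMap.toSpanSingleton_apply] using h1 k
        have htop : Wvj = ⊤ := by
          rcases eq_bot_or_eq_top Wvj with h | h
          · exfalso
            apply ha₀vj
            have hmm : a₀ • v j ∈ Wvj := (hmem _).mpr ⟨a₀, ha₀u, rfl⟩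
            rw [h] at hmm
            simpa using hmm
          · exact h
        have hwj : w j ∈ Wvj := htop ▸ Submodule.mem_top
        obtain ⟨a, h1, h2⟩ := (hmem _).mp hwj
        refine ⟨a, h2, fun i hij => ?_⟩
        obtain ⟨k, rfl⟩ := Fin.exists_succAbove_eq hij
        exact h1 k
    choose aj haj using key
    refine ⟨∑ j, aj j, fun i => ?_⟩
    rw [Finset.sum_smul, Finset.sum_eq_single i
      (fun j _ hji => (haj j).2 i (Ne.symm hji)) (fun h => absurd (Finset.mem_univ i) h)]
    exact (haj i).1

lemma density [IsSimpleModule A V] [FiniteDimensional K V]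
    (hEnd : ∀ f : V →ₗ[A] V, ∃ c : K, ∀ x, f x = c • x) (g : V →ₗ[K] V) :
    ∃ a : A, ∀ x, a • x = g x := by
  classical
  let bV := Module.finBasis K V
  obtain ⟨a, ha⟩ := density_aux hEnd _ bV bV.linearIndependent (g ∘ bV)
  set la : V →ₗ[K] V :=
    { toFun := fun x => a • x
      map_add' := fun x y => smul_add a x y
      map_smul' := fun c x => (smul_comm a c x : a • c • x = c • a • x) }
  have heq : la = g := bV.ext fun i => ha i
  exact ⟨a, fun x => LinearMap.congr_fun heq x⟩

end Density
section EndoScalar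
variable {K : Type} {A B : Type} [Field K] [Ring A] [Ring B] [Algebra K A] [Algebra K B]
variable {V : Type} [AddCommGroup V] [Module A V]

lemma endo_scalar (π : A →ₐ[K] B) (hπ : Function.Surjective π)
    (hker : ∀ x : A, π x = 0 → ∀ v : V, x • v = 0)
    [IsSimpleModule A V] (hB : IsSplit K B) (f : V →ₗ[A] V) :
    ∃ c : K, ∀ v : V, f v = algebraMap K A c • v := by
  classical
  -- lift the action of A on V to an action of B
  set ρ : A →+* AddMonoid.End V := Module.toAddMonoidEnd A V with hρ
  have hcond : ∀ x ∈ RingHom.ker π.toRingHom, ρ x = 0 := by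
    intro x hx
    refine AddMonoidHom.ext fun v => ?_
    exact hker x (by simpa [RingHom.mem_ker] using hx) v
  set σ : B →+* AddMonoid.End V :=
    RingHom.liftOfRightInverse π.toRingHom (Function.surjInv hπ)
      (Function.rightInverse_surjInv hπ) ⟨ρ, hcond⟩ with hσ
  have hσπ : ∀ a : A, σ (π a) = ρ a := fun a =>
    RingHom.liftOfRightInverse_comp_apply _ _ (Function.rightInverse_surjInv hπ) ⟨ρ, hcond⟩ a
  letI : Module B V := Module.compHom V σ
  have hkey : ∀ (a : A) (v : V), π a • v = a • v := by
    intro a v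
    show σ (π a) v = a • v
    rw [hσπ]
    rfl
  -- simplicity transfers to B
  haveI : Nontrivial V := IsSimpleModule.nontrivial A V
  haveI hsimpB : IsSimpleModule B V := by
    rw [isSimpleModule_iff]
    constructor
    intro U
    set U' : Submodule A V :=
      { carrier := U
        add_mem' := fun h1 h2 => U.add_mem h1 h2
        zero_mem' := U.zero_mem
        smul_mem' := fun a v hv => by
          have : π a • v ∈ U := U.smul_mem (π a) hv
          rwa [hkey] at this } with hU'
    rcases eq_bot_or_eq_top U' with h | h
    · left
      ext x
      have hx : x ∈ U ↔ x ∈ U' := Iff.rfl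
      rw [hx, h]
      rfl
    · right
      ext x
      have hx : x ∈ U ↔ x ∈ U' := Iff.rfl
      rw [hx, h]
      rfl
  -- f as a B-linear map
  set f' : V →ₗ[B] V :=
    { toFun := f
      map_add' := f.map_add
      map_smul' := by
        intro b v
        obtain ⟨a, rfl⟩ := hπ b
        show f (π a • v) = π a • f v
        rw [hkey, f.map_smul, hkey] } with hf'
  obtain ⟨c, hc⟩ := hB V inferInstance inferInstance hsimpB f'
  refine ⟨c, fun v => ?_⟩
  have h1 := hc v
  have h2 : algebraMap K B c = π (algebraMap K A c) := (π.commutes c).symm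
  rw [h2] at h1
  have h3 : f' v = f v := rfl
  rw [h3, hkey] at h1
  exact h1

end EndoScalar
open TensorProduct

section BaseChange

variable {K L : Type} [Field K] [Field L] [Algebra K L]
variable {A : Type} [Ring A] [Algebra K A]

section ActMap
variable (K A)
variable (V : Type) [AddCommGroup V] [Module A V] [Module K V] [IsScalarTower K A V]

/-- The action of `a : A` on `V` as a `K`-linear map. -/
private def actmap (a : A) : V →ₗ[K] V where
  toFun x := a • x
  map_add' := smul_add a
  map_smul' c x := (smul_comm a c x : a • c • x = c • a • x)

variable (L) in
/-- The ring map `A →+* End_K (L ⊗ V)`. -/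
private noncomputable def psiA : A →+* Module.End K (L ⊗[K] V) where
  toFun a := LinearMap.lTensor L (actmap K A V a)
  map_one' := by
    have h : actmap K A V 1 = LinearMap.id := by
      ext x; simp [actmap]
    show LinearMap.lTensor L (actmap K A V 1) = LinearMap.id
    rw [h, LinearMap.lTensor_id]
  map_mul' a a' := by
    have h : actmap K A V (a * a') = (actmap K A V a).comp (actmap K A V a') := by
      ext x; simp [actmap, mul_smul]
    show LinearMap.lTensor L (actmap K A V (a * a')) = _
    rw [h, LinearMap.lTensor_comp]
    rfl
  map_zero' := by
    have h : actmap K A V 0 = 0 := by ext x; simp [actmap]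
    show LinearMap.lTensor L (actmap K A V 0) = 0
    rw [h, LinearMap.lTensor_zero]
  map_add' a a' := by
    have h : actmap K A V (a + a') = actmap K A V a + actmap K A V a' := by
      ext x; simp [actmap, add_smul]
    show LinearMap.lTensor L (actmap K A V (a + a')) = _
    rw [h, LinearMap.lTensor_add]

end ActMap

section ELP
variable {ι : Type} [DecidableEq ι] (b : Module.Basis ι K L)

/-- Coordinates of `L ⊗ P` with respect to a `K`-basis of `L`. -/
private noncomputable def eLP (P : Type) [AddCommGroup P] [Module K P] :
    (L ⊗[K] P) ≃ₗ[K] (ι →₀ P) :=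
  (TensorProduct.congr b.repr (LinearEquiv.refl K P)).trans
    (TensorProduct.finsuppScalarLeft K P ι)

private lemma eLP_tmul_apply (P : Type) [AddCommGroup P] [Module K P] (c : L) (x : P) (i : ι) :
    eLP b P (c ⊗ₜ[K] x) i = b.repr c i • x := by
  classical
  simp [eLP, TensorProduct.finsuppScalarLeft_apply_tmul_apply]

private lemma eLP_basis_tmul (P : Type) [AddCommGroup P] [Module K P] (i : ι) (x : P) :
    eLP b P ((b i) ⊗ₜ[K] x) = Finsupp.single i x := by
  ext i'
  rw [eLP_tmul_apply, Module.Basis.repr_self]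
  rcases eq_or_ne i i' with rfl | h
  · simp
  · simp [Finsupp.single_eq_of_ne' h]

private lemma eLP_recon (P : Type) [AddCommGroup P] [Module K P] (t : L ⊗[K] P) :
    t = ∑ i ∈ (eLP b P t).support, (b i) ⊗ₜ[K] (eLP b P t i) := by
  apply (eLP b P).injective
  rw [map_sum]
  have h : ∀ i ∈ (eLP b P t).support,
      eLP b P ((b i) ⊗ₜ[K] (eLP b P t i)) = Finsupp.single i (eLP b P t i) :=
    fun i _ => eLP_basis_tmul b P i _
  rw [Finset.sum_congr rfl h]
  exact (Finsupp.sum_single (eLP b P t)).symm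

end ELP

set_option maxHeartbeats 1000000 in
theorem key2 {ι : Type} [DecidableEq ι] (b : Module.Basis ι K L)
    (V : Type) [AddCommGroup V] [Module A V] [Module K V] [IsScalarTower K A V]
    [IsSimpleModule A V] [FiniteDimensional K V]
    (hEnd : ∀ f : V →ₗ[A] V, ∃ c : K, ∀ x, f x = c • x)
    (z : L ⊗[K] A) (hz : z ∈ Ideal.jacobson (⊥ : Ideal (L ⊗[K] A)))
    (i : ι) (v : V) : (eLP b A z i) • v = 0 := by
  classical
  letI instA : Module A (L ⊗[K] V) := Module.compHom _ (psiA K L A V)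
  have smulA_tmul : ∀ (a : A) (d : L) (x : V),
      a • (d ⊗ₜ[K] x : L ⊗[K] V) = d ⊗ₜ[K] (a • x) := by
    intro a d x
    show LinearMap.lTensor L (actmap K A V a) (d ⊗ₜ[K] x) = d ⊗ₜ[K] (a • x)
    rw [LinearMap.lTensor_tmul]
    rfl
  letI towKA : IsScalarTower K A (L ⊗[K] V) := by
    constructor
    intro k a t
    show LinearMap.lTensor L (actmap K A V (k • a)) t = k • LinearMap.lTensor L (actmap K A V a) t
    have h : actmap K A V (k • a) = k • actmap K A V a := by
      ext x; simp [actmap, smul_assoc]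
    rw [h, LinearMap.lTensor_smul]
    rfl
  letI sccLA : SMulCommClass L A (L ⊗[K] V) := by
    constructor
    intro l a t
    induction t with
    | zero => simp
    | tmul d x =>
      rw [smulA_tmul, TensorProduct.smul_tmul', TensorProduct.smul_tmul', smulA_tmul]
    | add t1 t2 h1 h2 =>
      rw [smul_add, smul_add, h1, h2, smul_add, smul_add]
  letI instR : Module (L ⊗[K] A) (L ⊗[K] V) := TensorProduct.Algebra.module
  -- basic computation of the R-action on pure tensors
  have smul_def' : ∀ (c : L) (a : A) (m : (L ⊗[K] V)), ((c ⊗ₜ[K] a : L ⊗[K] A)) • m = c • (a • m) :=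
    fun c a m => rfl
  have smul_tt : ∀ (c : L) (a : A) (d : L) (x : V),
      ((c ⊗ₜ[K] a : L ⊗[K] A)) • (d ⊗ₜ[K] x : (L ⊗[K] V)) = (c * d) ⊗ₜ[K] (a • x) := by
    intro c a d x
    rw [smul_def', smulA_tmul, TensorProduct.smul_tmul', smul_eq_mul]
  have smul_L : ∀ (d : L) (m : (L ⊗[K] V)), ((d ⊗ₜ[K] (1 : A) : L ⊗[K] A)) • m = d • m := by
    intro d m
    rw [smul_def', one_smul]
  -- simplicity of (L ⊗[K] V) as an (L ⊗ A)-module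
  have hsimpleM : ∀ U : Submodule (L ⊗[K] A) (L ⊗[K] V), U = ⊥ ∨ U = ⊤ := by
    intro U
    rcases eq_or_ne U ⊥ with h | h
    · exact Or.inl h
    right
    obtain ⟨u, hu, hu0⟩ := (Submodule.ne_bot_iff U).mp h
    have h1tm : ∀ x : V, ((1 : L) ⊗ₜ[K] x : (L ⊗[K] V)) ∈ U := by
      intro x
      obtain ⟨m, hm⟩ : ∃ m : ι →₀ V, m = eLP b V u := ⟨_, rfl⟩
      have hm0 : m ≠ 0 := by
        intro h0
        exact hu0 ((LinearEquiv.map_eq_zero_iff _).mp (by rw [← hm, h0]))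
      obtain ⟨i₀, hi₀⟩ : ∃ i₀, m i₀ ≠ 0 := by
        by_contra hc
        push_neg at hc
        exact hm0 (Finsupp.ext hc)
      -- a functional φ with φ (m i₀) = 1
      have hli : LinearIndepOn K id ({m i₀} : Set V) :=
        LinearIndepOn.singleton (R := K) (v := id) hi₀
      set bb := Module.Basis.extend hli with hbb
      have hmem : m i₀ ∈ hli.extend (Set.subset_univ _) := hli.subset_extend _ rfl
      set φ : V →ₗ[K] K := bb.coord ⟨m i₀, hmem⟩ with hφdef
      have hφ : φ (m i₀) = 1 := by
        have hx : φ (bb ⟨m i₀, hmem⟩) = 1 := by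
          rw [hφdef, Module.Basis.coord_apply, Module.Basis.repr_self, Finsupp.single_eq_same]
        rwa [Module.Basis.extend_apply_self hli] at hx
      obtain ⟨a, ha⟩ := density hEnd ((LinearMap.toSpanSingleton K V x).comp φ)
      have ha' : ∀ y : V, a • y = φ y • x := fun y => by
        rw [ha y]; rfl
      obtain ⟨c, hcdef⟩ : ∃ c : L, c = ∑ i' ∈ m.support, φ (m i') • b i' := ⟨_, rfl⟩
      have hrecon : u = ∑ i' ∈ m.support, (b i') ⊗ₜ[K] (m i') := by
        have h := eLP_recon b V u
        rw [← hm] at h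
        exact h
      have hcu : (((1 : L) ⊗ₜ[K] a : L ⊗[K] A)) • u = c ⊗ₜ[K] x := by
        conv_lhs => rw [hrecon]
        rw [Finset.smul_sum, hcdef, TensorProduct.sum_tmul]
        refine Finset.sum_congr rfl fun i' _ => ?_
        rw [smul_tt, one_mul, ha', ← TensorProduct.smul_tmul]
      have hc0 : c ≠ 0 := by
        intro h0
        have h1 : b.repr c i₀ = 1 := by
          rw [hcdef, map_sum]
          have h2 : ∀ i' ∈ m.support,
              (b.repr (φ (m i') • b i')) i₀ = if i' = i₀ then φ (m i') else 0 := by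
            intro i' _
            rw [map_smul, Module.Basis.repr_self]
            rcases eq_or_ne i' i₀ with rfl | hne
            · simp
            · simp [Finsupp.single_eq_of_ne hne, hne]
          rw [Finsupp.finset_sum_apply, Finset.sum_congr rfl h2, Finset.sum_ite_eq' m.support i₀]
          simp [hi₀, hφ]
        rw [h0, map_zero] at h1
        simp at h1
      have hcv : (c ⊗ₜ[K] x : (L ⊗[K] V)) ∈ U := hcu ▸ U.smul_mem _ hu
      have hconv : ((1 : L) ⊗ₜ[K] x : (L ⊗[K] V)) = ((c⁻¹ ⊗ₜ[K] (1 : A) : L ⊗[K] A)) • (c ⊗ₜ[K] x : (L ⊗[K] V)) := by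
        rw [smul_L, TensorProduct.smul_tmul', smul_eq_mul, inv_mul_cancel₀ hc0]
      rw [hconv]
      exact U.smul_mem _ hcv
    rw [eq_top_iff]
    rintro t -
    induction t with
    | zero => exact U.zero_mem
    | tmul d x =>
      have hdx : (d ⊗ₜ[K] x : (L ⊗[K] V)) = ((d ⊗ₜ[K] (1 : A) : L ⊗[K] A)) • ((1 : L) ⊗ₜ[K] x : (L ⊗[K] V)) := by
        rw [smul_tt, mul_one, one_smul]
      rw [hdx]
      exact U.smul_mem _ (h1tm x)
    | add t1 t2 h1 h2 => exact U.add_mem h1 h2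
  -- z annihilates (L ⊗[K] V)
  have hkill : ∀ w : (L ⊗[K] V), z • w = 0 := by
    intro w
    rcases eq_or_ne w 0 with rfl | hw
    · exact smul_zero z
    set gw : (L ⊗[K] A) →ₗ[L ⊗[K] A] (L ⊗[K] V) := LinearMap.toSpanSingleton _ _ w with hgw
    have hrange : LinearMap.range gw = ⊤ := by
      rw [← LinearMap.span_singleton_eq_range]
      rcases hsimpleM (Submodule.span _ {w}) with h | h
      · exfalso
        have : w ∈ Submodule.span (L ⊗[K] A) {w} := Submodule.mem_span_singleton_self w
        rw [h] at this
        exact hw (by simpa using this)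
      · exact h
    haveI : Nontrivial (L ⊗[K] V) := ⟨w, 0, hw⟩
    haveI hsM : IsSimpleModule (L ⊗[K] A) (L ⊗[K] V) := by rw [isSimpleModule_iff]; exact ⟨hsimpleM⟩
    haveI hq : IsSimpleModule (L ⊗[K] A) ((L ⊗[K] A) ⧸ (LinearMap.ker gw)) :=
      IsSimpleModule.congr (gw.quotKerEquivRange.trans (LinearEquiv.ofTop _ hrange))
    have hco : IsCoatom (LinearMap.ker gw) := isSimpleModule_iff_isCoatom.mp hq
    have hmax : Ideal.IsMaximal (LinearMap.ker gw) := Ideal.isMaximal_def.mpr hco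
    have hle : Ideal.jacobson (⊥ : Ideal (L ⊗[K] A)) ≤ LinearMap.ker gw :=
      sInf_le ⟨bot_le, hmax⟩
    have := hle hz
    simpa [hgw, LinearMap.toSpanSingleton_apply] using this
  -- extract coefficients
  obtain ⟨za, hza⟩ : ∃ za : ι →₀ A, za = eLP b A z := ⟨_, rfl⟩
  by_cases hiz : i ∈ za.support
  · have hreconz : z = ∑ i' ∈ za.support, (b i') ⊗ₜ[K] (za i') := by
      have := eLP_recon b A z
      rw [← hza] at this
      exact this
    have hz1 : z • ((1 : L) ⊗ₜ[K] v : (L ⊗[K] V)) = 0 := hkill _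
    rw [hreconz, Finset.sum_smul] at hz1
    have hz2 : ∑ i' ∈ za.support, (b i') ⊗ₜ[K] ((za i') • v) = (0 : (L ⊗[K] V)) := by
      rw [← hz1]
      refine (Finset.sum_congr rfl fun i' _ => ?_).symm
      rw [smul_tt, mul_one]
    have hz3 := congrArg (eLP b V) hz2
    rw [map_sum, map_zero] at hz3
    have hz4 : ∀ i' ∈ za.support,
        eLP b V ((b i') ⊗ₜ[K] ((za i') • v)) = Finsupp.single i' ((za i') • v) :=
      fun i' _ => eLP_basis_tmul b V i' _
    rw [Finset.sum_congr rfl hz4] at hz3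
    have hz5 := congrArg (fun F : ι →₀ V => F i) hz3
    simp only [Finsupp.coe_finset_sum, Finset.sum_apply, Finsupp.coe_zero, Pi.zero_apply] at hz5
    rw [Finset.sum_eq_single i (fun i' _ hne => Finsupp.single_eq_of_ne' hne)
      (fun h => absurd hiz h)] at hz5
    rw [Finsupp.single_eq_same] at hz5
    rw [← hza]
    exact hz5
  · rw [← hza, Finsupp.notMem_support_iff.mp hiz, zero_smul]

end BaseChange

section SpanD
variable {K L : Type} [Field K] [Field L] [Algebra K L] {A : Type} [Ring A] [Algebra K A]

private def DkSet (K L A : Type) [Field K] [Field L] [Algebra K L] [Ring A] [Algebra K A]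
    (k : ℕ) : Set (L ⊗[K] A) :=
  {y | ∃ (c : L) (l : List A), l.length = k ∧
    (∀ x ∈ l, x ∈ Ideal.jacobson (⊥ : Ideal A)) ∧ y = c ⊗ₜ[K] l.prod}

private lemma mem_DkSet {k : ℕ} {y : L ⊗[K] A} :
    y ∈ DkSet K L A k ↔ ∃ (c : L) (l : List A), l.length = k ∧
      (∀ x ∈ l, x ∈ Ideal.jacobson (⊥ : Ideal A)) ∧ y = c ⊗ₜ[K] l.prod := Iff.rfl

private lemma spanD_nilpotent (n : ℕ) (hnpos : 0 < n)
    (hnil : ∀ l : List A, l.length = n → (∀ x ∈ l, x ∈ Ideal.jacobson (⊥ : Ideal A)) → l.prod = 0)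
    {w : L ⊗[K] A}
    (hw : w ∈ Ideal.span {y : L ⊗[K] A |
      ∃ x ∈ Ideal.jacobson (⊥ : Ideal A), ∃ c : L, y = c ⊗ₜ[K] x}) :
    w ^ n = 0 := by
  classical
  have hmul : ∀ (k₁ k₂ : ℕ) (w₁ w₂ : L ⊗[K] A), w₁ ∈ AddSubmonoid.closure (DkSet K L A k₁) →
      w₂ ∈ AddSubmonoid.closure (DkSet K L A k₂) →
      w₁ * w₂ ∈ AddSubmonoid.closure (DkSet K L A (k₁ + k₂)) := by
    intro k₁ k₂ w₁ w₂ h₁ h₂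
    induction h₂ using AddSubmonoid.closure_induction with
    | mem y hy =>
      induction h₁ using AddSubmonoid.closure_induction with
      | mem y' hy' =>
        rw [mem_DkSet] at hy hy'
        obtain ⟨c, l, hlen, hl, rfl⟩ := hy'
        obtain ⟨d, l2, hlen2, hl2, rfl⟩ := hy
        refine AddSubmonoid.subset_closure (mem_DkSet.mpr ⟨c * d, l ++ l2, by simp [hlen, hlen2], ?_, ?_⟩)
        · intro x hx
          rcases List.mem_append.mp hx with h | h
          exacts [hl x h, hl2 x h]
        · rw [Algebra.TensorProduct.tmul_mul_tmul, List.prod_append]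
      | zero => rw [zero_mul]; exact AddSubmonoid.zero_mem _
      | add a b ha hb iha ihb => rw [add_mul]; exact AddSubmonoid.add_mem _ iha ihb
    | zero => rw [mul_zero]; exact AddSubmonoid.zero_mem _
    | add a b ha hb iha ihb => rw [mul_add]; exact AddSubmonoid.add_mem _ iha ihb
  have hbase : w ∈ AddSubmonoid.closure (DkSet K L A 1) := by
    set F : Submodule (L ⊗[K] A) (L ⊗[K] A) :=
      { carrier := AddSubmonoid.closure (DkSet K L A 1)
        add_mem' := fun h1 h2 => AddSubmonoid.add_mem _ h1 h2
        zero_mem' := AddSubmonoid.zero_mem _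
        smul_mem' := by
          intro r w' hw'
          simp only [Set.mem_setOf_eq, smul_eq_mul] at *
          induction hw' using AddSubmonoid.closure_induction with
          | mem y hy =>
            rw [mem_DkSet] at hy
            obtain ⟨c, l, hlen, hl, rfl⟩ := hy
            obtain ⟨x, rfl⟩ := List.length_eq_one_iff.mp hlen
            induction r with
            | zero => rw [zero_mul]; exact AddSubmonoid.zero_mem _
            | tmul d a0 =>
              rw [Algebra.TensorProduct.tmul_mul_tmul]
              refine AddSubmonoid.subset_closure (mem_DkSet.mpr ⟨d * c, [a0 * x], rfl, ?_, ?_⟩)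
              · intro z hz
                simp only [List.mem_singleton] at hz
                subst hz
                exact Submodule.smul_mem _ a0 (hl x (by simp))
              · rw [List.prod_singleton, List.prod_singleton]
            | add r1 r2 h1 h2 => rw [add_mul]; exact AddSubmonoid.add_mem _ h1 h2
          | zero => rw [mul_zero]; exact AddSubmonoid.zero_mem _
          | add y1 y2 hy1 hy2 ih1 ih2 => rw [mul_add]; exact AddSubmonoid.add_mem _ ih1 ih2 } with hF
    have hle : Ideal.span {y : L ⊗[K] A |
        ∃ x ∈ Ideal.jacobson (⊥ : Ideal A), ∃ c : L, y = c ⊗ₜ[K] x} ≤ F := by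
      rw [Ideal.span_le]
      rintro y ⟨x, hx, c, rfl⟩
      exact AddSubmonoid.subset_closure (mem_DkSet.mpr ⟨c, [x], rfl, by simpa using hx,
        by rw [List.prod_singleton]⟩)
    exact hle hw
  obtain ⟨k, rfl⟩ := Nat.exists_eq_succ_of_ne_zero hnpos.ne'
  have hpow : ∀ j : ℕ, w ^ (j + 1) ∈ AddSubmonoid.closure (DkSet K L A (j + 1)) := by
    intro j
    induction j with
    | zero => simpa using hbase
    | succ j ih =>
      have h := hmul (j + 1) 1 _ _ ih hbase
      rw [← pow_succ] at h
      exact h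
  have hzero : AddSubmonoid.closure (DkSet K L A (k + 1)) ≤ ⊥ := by
    rw [AddSubmonoid.closure_le]
    rintro y hy
    rw [mem_DkSet] at hy
    obtain ⟨c, l, hlen, hl, rfl⟩ := hy
    rw [hnil l hlen hl, TensorProduct.tmul_zero]
    exact AddSubmonoid.zero_mem _
  exact AddSubmonoid.mem_bot.mp (hzero (hpow k))

end SpanD

/-- Let `A` be a finite-dimensional algebra over a field `K` admitting a
(two-sided) ideal `N` which is nilpotent and such that `A/N` is split (i.e. `A` is split),
and let `L/K` be a field extension. Then `Jac(L ⊗[K] A) = L ⊗[K] Jac(A)`: the Jacobson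
radical is stable under scalar extension. -/
theorem jacobson_baseChange_of_split
    (K L : Type) [Field K] [Field L] [Algebra K L]
    (A : Type) [Ring A] [Algebra K A] [FiniteDimensional K A]
    (N : Ideal A)
    (hN2 : ∀ x ∈ N, ∀ a : A, x * a ∈ N)
    (hNnil : ∃ n : ℕ, ∀ l : List A, l.length = n → (∀ x ∈ l, x ∈ N) → l.prod = 0)
    (hsplit : ∃ (B : Type) (_ : Ring B) (_ : Algebra K B) (π : A →ₐ[K] B),
        Function.Surjective π ∧ RingHom.ker π.toRingHom = N ∧ IsSplit K B) :
    Ideal.jacobson (⊥ : Ideal (L ⊗[K] A)) =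
      Ideal.span {y : L ⊗[K] A |
        ∃ x ∈ Ideal.jacobson (⊥ : Ideal A), ∃ c : L, y = c ⊗ₜ[K] x} := by
  classical
  obtain ⟨B, _ringB, _algB, π, hπsurj, hπker, hBsplit⟩ := hsplit
  -- `N` is contained in the Jacobson radical of `A`
  have hNJ : N ≤ Ideal.jacobson (⊥ : Ideal A) := by
    obtain ⟨nN, hnN⟩ := hNnil
    intro x hx
    apply mem_jac_of_mul_nilpotent
    intro y
    refine ⟨nN, ?_⟩
    rw [← List.prod_replicate]
    refine hnN _ List.length_replicate fun z hz => ?_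
    rw [List.eq_of_mem_replicate hz]
    exact N.smul_mem y hx
  haveI : IsArtinianRing A := isArtinian_of_tower K inferInstance
  obtain ⟨nJ, hnJpos, hnJ⟩ := jac_nilpotent A
  refine le_antisymm ?_ ?_
  · -- hard direction : Jac(L ⊗ A) ≤ L ⊗ Jac(A)
    intro z hz
    set b := Module.Basis.ofVectorSpace K L with hb
    have hcoef : ∀ i, eLP b A z i ∈ Ideal.jacobson (⊥ : Ideal A) := by
      intro i
      show eLP b A z i ∈ sInf {J : Ideal A | ⊥ ≤ J ∧ J.IsMaximal}
      rw [Submodule.mem_sInf]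
      rintro m ⟨-, hmax⟩
      haveI := hmax
      haveI hsimp : IsSimpleModule A (A ⧸ m) :=
        isSimpleModule_iff_isCoatom.mpr (Ideal.isMaximal_def.mp hmax)
      haveI : Module.Finite K (A ⧸ m) :=
        Module.Finite.of_surjective ((m.mkQ).restrictScalars K) (Submodule.mkQ_surjective m)
      have hJm : Ideal.jacobson (⊥ : Ideal A) ≤ m := sInf_le ⟨bot_le, hmax⟩
      have hker : ∀ x : A, π x = 0 → ∀ v : A ⧸ m, x • v = 0 := by
        intro x hx v
        have hxN : x ∈ N := by
          rw [← hπker]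
          exact RingHom.mem_ker.mpr hx
        have hxJ : x ∈ Ideal.jacobson (⊥ : Ideal A) := hNJ hxN
        obtain ⟨a, rfl⟩ := Submodule.Quotient.mk_surjective m v
        rw [← Submodule.Quotient.mk_smul]
        exact (Submodule.Quotient.mk_eq_zero m).mpr (hJm (jac_mul_mem_right hxJ))
      have hEnd : ∀ f : (A ⧸ m) →ₗ[A] (A ⧸ m), ∃ c : K, ∀ x, f x = c • x := by
        intro f
        obtain ⟨c, hc⟩ := endo_scalar π hπsurj hker hBsplit f
        exact ⟨c, fun x => by rw [hc x, algebraMap_smul]⟩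
      have hres := key2 b (A ⧸ m) hEnd z hz i (Submodule.Quotient.mk 1)
      rw [← Submodule.Quotient.mk_smul] at hres
      have h1 : eLP b A z i • (1 : A) = eLP b A z i := by rw [smul_eq_mul, mul_one]
      rw [h1] at hres
      exact (Submodule.Quotient.mk_eq_zero m).mp hres
    have hrec := eLP_recon b A z
    rw [hrec]
    exact Submodule.sum_mem _ fun i _ => Ideal.subset_span ⟨_, hcoef i, b i, rfl⟩
  · -- easy direction : L ⊗ Jac(A) ≤ Jac(L ⊗ A)
    rw [Ideal.span_le]
    rintro y ⟨x, hx, c, rfl⟩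
    apply mem_jac_of_mul_nilpotent
    intro u
    refine ⟨nJ, spanD_nilpotent nJ hnJpos hnJ ?_⟩
    exact Ideal.mul_mem_left _ u (Ideal.subset_span ⟨x, hx, c, rfl⟩)
end Nil
end

section
/- Let O be a discrete valuation ring with maximal ideal m, residue field k and fraction field K, and let A be a finite free O-algebra such that the special fiber A(m) = k ⊗_O A is a split k-algebra. Then dim_k Jac(A(m)) ≥ dim_K Jac(A^K). -/
open TensorProduct

lemma aux_mem_jacobson_bot {B : Type*} [Ring B] {x : B}
    (h : ∀ y : B, IsNilpotent (y * x)) : x ∈ Ideal.jacobson (⊥ : Ideal B) := by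
  rw [Ideal.mem_jacobson_iff]
  intro y
  obtain ⟨u, hu⟩ := (h y).isUnit_one_add
  refine ⟨(↑u⁻¹ : B), ?_⟩
  have h1 : (↑u⁻¹ : B) * (1 + y * x) = 1 := by rw [← hu]; exact u.inv_mul
  rw [Ideal.mem_bot]
  have h2 : (↑u⁻¹ : B) * y * x + ↑u⁻¹ - 1 = ↑u⁻¹ * (1 + y * x) - 1 := by noncomm_ring
  rw [h2, h1, sub_self]

lemma aux_isNilpotent_of_mem_jacobson {B : Type*} [Ring B] [IsArtinian B B] {x : B}
    (hx : x ∈ Ideal.jacobson (⊥ : Ideal B)) : IsNilpotent x := by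
  have hmono : ∀ {m n : ℕ}, m ≤ n → Ideal.span {x ^ n} ≤ Ideal.span {x ^ m} := by
    intro m n hmn
    rw [Ideal.span_le, Set.singleton_subset_iff, SetLike.mem_coe]
    exact Submodule.mem_span_singleton.mpr
      ⟨x ^ (n - m), by rw [smul_eq_mul, ← pow_add, Nat.sub_add_cancel hmn]⟩
  let f : ℕ →o (Ideal B)ᵒᵈ :=
    ⟨fun n => OrderDual.toDual (Ideal.span {x ^ n}), fun m n h => hmono h⟩
  obtain ⟨n, hn⟩ := IsArtinian.monotone_stabilizes f
  have he : Ideal.span {x ^ n} = Ideal.span {x ^ (n + 1)} := hn (n + 1) (Nat.le_succ n)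
  have hxn : x ^ n ∈ Ideal.span {x ^ (n + 1)} := by
    rw [← he]; exact Submodule.mem_span_singleton_self _
  obtain ⟨c, hc⟩ := Submodule.mem_span_singleton.mp hxn
  rw [smul_eq_mul] at hc
  obtain ⟨z, hz⟩ := Ideal.mem_jacobson_iff.mp hx (-c)
  rw [Ideal.mem_bot] at hz
  have h1 : z * (1 - c * x) = 1 := by
    have : z * (1 - c * x) = (z * (-c) * x + z - 1) + 1 := by noncomm_ring
    rw [this, hz, zero_add]
  have h2 : (1 - c * x) * x ^ n = 0 := by
    have : (1 - c * x) * x ^ n = x ^ n - c * x ^ (n + 1) := by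
      rw [sub_mul, one_mul, mul_assoc, ← pow_succ']
    rw [this, hc, sub_self]
  refine ⟨n, ?_⟩
  calc x ^ n = z * (1 - c * x) * x ^ n := by rw [h1, one_mul]
    _ = z * ((1 - c * x) * x ^ n) := by rw [mul_assoc]
    _ = 0 := by rw [h2, mul_zero]

set_option maxHeartbeats 1600000 in
theorem aux_main (O : Type) [CommRing O] [IsDomain O] [IsPrincipalIdealRing O]
    (K : Type) [Field K] [Algebra O K] [IsFractionRing O K]
    (k : Type) [Field k] [Algebra O k] (hsurj : Function.Surjective (algebraMap O k))
    (A : Type) [Ring A] [Algebra O A] [Module.Free O A] [Module.Finite O A] :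
    Module.finrank K ((Ideal.jacobson (⊥ : Ideal (K ⊗[O] A))).restrictScalars K) ≤
      Module.finrank k ((Ideal.jacobson (⊥ : Ideal (k ⊗[O] A))).restrictScalars k) := by
  classical
  let iB : A →ₐ[O] K ⊗[O] A := Algebra.TensorProduct.includeRight
  let iC : A →ₐ[O] k ⊗[O] A := Algebra.TensorProduct.includeRight
  let b := Module.Free.chooseBasis O A
  -- `iB` is injective
  have hiB : Function.Injective iB := by
    rw [injective_iff_map_eq_zero]
    intro x hx
    have hx' : (1 : K) ⊗ₜ[O] x = 0 := hx
    have h0 := congrArg (Algebra.TensorProduct.basis K b).repr hx'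
    rw [Algebra.TensorProduct.basis_repr_tmul, map_zero, one_smul] at h0
    have h1 : b.repr x = 0 := by
      ext i
      have h2 := DFunLike.congr_fun h0 i
      rw [Finsupp.mapRange_apply] at h2
      exact IsFractionRing.injective O K (by simpa using h2)
    simpa using congrArg b.repr.symm h1
  -- `iC` is surjective
  have hiC : Function.Surjective iC := by
    intro x
    induction x with
    | zero => exact ⟨0, map_zero _⟩
    | tmul t a0 =>
      obtain ⟨c, rfl⟩ := hsurj t
      refine ⟨c • a0, ?_⟩
      show (1 : k) ⊗ₜ[O] (c • a0) = algebraMap O k c ⊗ₜ[O] a0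
      rw [tmul_smul, smul_tmul', Algebra.algebraMap_eq_smul_one]
    | add x y hx hy =>
      obtain ⟨a1, rfl⟩ := hx
      obtain ⟨a2, rfl⟩ := hy
      exact ⟨a1 + a2, map_add _ _ _⟩
  -- the lattice J₀
  let J₀ : Submodule O A := Submodule.comap iB.toLinearMap
    ((Ideal.jacobson (⊥ : Ideal (K ⊗[O] A))).restrictScalars O)
  have hJ0 : ∀ x : A, x ∈ J₀ ↔ iB x ∈ Ideal.jacobson (⊥ : Ideal (K ⊗[O] A)) :=
    fun _ => Iff.rfl
  -- Smith normal form
  obtain ⟨n, bM, bN, f, a, snf⟩ := Submodule.smithNormalForm b J₀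
  -- Artinian instances
  haveI : Module.Finite K (K ⊗[O] A) := inferInstance
  haveI : IsArtinian K (K ⊗[O] A) := inferInstance
  haveI : IsArtinian (K ⊗[O] A) (K ⊗[O] A) := isArtinian_of_tower K inferInstance
  -- every element of J₀ is nilpotent
  have hnil : ∀ x ∈ J₀, IsNilpotent x := by
    intro x hx
    obtain ⟨m, hm⟩ := aux_isNilpotent_of_mem_jacobson ((hJ0 x).mp hx)
    exact ⟨m, hiB (by rw [map_pow, hm, map_zero])⟩
  -- saturation of J₀
  have hsat : ∀ (c : O) (x : A), c ≠ 0 → c • x ∈ J₀ → x ∈ J₀ := by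
    intro c x hc hcx
    have ht : algebraMap O K c ≠ 0 := fun h =>
      hc (IsFractionRing.injective O K (by rw [h, map_zero]))
    have h1 : iB (c • x) = algebraMap K (K ⊗[O] A) (algebraMap O K c) * iB x := by
      rw [map_smul, ← Algebra.smul_def, algebraMap_smul]
    have h2 : iB x = algebraMap K (K ⊗[O] A) (algebraMap O K c)⁻¹ * iB (c • x) := by
      rw [h1, ← mul_assoc, ← map_mul, inv_mul_cancel₀ ht, map_one, one_mul]
    rw [hJ0, h2]
    exact Ideal.mul_mem_left _ _ ((hJ0 _).mp hcx)
  -- span description of J₀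
  have hspan : Submodule.span O (Set.range fun j => (bN j : A)) = J₀ := by
    have h1 := bN.span_eq
    apply_fun Submodule.map J₀.subtype at h1
    rw [Submodule.map_span, ← Set.range_comp, Submodule.map_top, Submodule.range_subtype] at h1
    exact h1
  -- the diagonal entries are units
  have hane : ∀ j, a j ≠ 0 := by
    intro j h0
    have := snf j
    rw [h0, zero_smul] at this
    exact bN.ne_zero j (by exact_mod_cast Subtype.ext this)
  have hUnit : ∀ j, IsUnit (a j) := by
    intro j
    have hbm : bM (f j) ∈ J₀ := by
      refine hsat (a j) _ (hane j) ?_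
      rw [← snf j]; exact (bN j).2
    have hone : (1 : O) ∈ Ideal.span {a j} := by
      have hmap : Submodule.map (bM.coord (f j)) J₀ ≤ Ideal.span {a j} := by
        rw [← hspan, Submodule.map_span, Submodule.span_le]
        rintro y ⟨x, ⟨l, rfl⟩, rfl⟩
        simp only [SetLike.mem_coe]
        rw [snf l, map_smul, Module.Basis.coord_apply, Module.Basis.repr_self, smul_eq_mul]
        by_cases hl : l = j
        · subst hl
          rw [Finsupp.single_eq_same, mul_one]
          exact Ideal.mem_span_singleton_self _
        · rw [Finsupp.single_eq_of_ne' (fun h => hl (f.injective h)), mul_zero]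
          exact Ideal.zero_mem _
      have h1 : bM.coord (f j) (bM (f j)) = 1 := by
        rw [Module.Basis.coord_apply, Module.Basis.repr_self, Finsupp.single_eq_same]
      exact h1 ▸ hmap ⟨bM (f j), hbm, rfl⟩
    obtain ⟨d, hd⟩ := Ideal.mem_span_singleton'.mp hone
    exact IsUnit.of_mul_eq_one d (by rw [mul_comm]; exact hd)
  -- C side: membership in the Jacobson radical
  have hmemC : ∀ j, iC (bN j : A) ∈ Ideal.jacobson (⊥ : Ideal (k ⊗[O] A)) := by
    intro j
    apply aux_mem_jacobson_bot
    intro y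
    obtain ⟨a', rfl⟩ := hiC y
    rw [← map_mul]
    have hmem : a' * (bN j : A) ∈ J₀ := by
      rw [hJ0, map_mul]
      exact Ideal.mul_mem_left _ _ ((hJ0 _).mp (bN j).2)
    obtain ⟨m, hm⟩ := hnil _ hmem
    exact ⟨m, by rw [← map_pow, hm, map_zero]⟩
  -- C side: linear independence
  let bC := Algebra.TensorProduct.basis k bM
  let w : Fin n → kˣ := fun j => ((hUnit j).map (algebraMap O k)).unit
  have heq : ∀ j, iC (bN j : A) = (w j : k) • bC (f j) := by
    intro j
    have h1 : iC (bM (f j)) = bC (f j) := by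
      rw [Algebra.TensorProduct.basis_apply]; rfl
    rw [snf j, map_smul, h1, ← algebraMap_smul k (a j) (bC (f j))]
    rfl
  have hind : LinearIndependent k (fun j : Fin n => iC (bN j : A)) := by
    have h1 : LinearIndependent k (fun j : Fin n => bC (f j)) :=
      bC.linearIndependent.comp f f.injective
    have h2 := h1.units_smul w
    have h3 : (fun j : Fin n => iC (bN j : A)) = (w • fun j : Fin n => bC (f j)) := by
      funext j
      rw [heq j]
      rfl
    rw [h3]
    exact h2
  -- C side: the dimension bound
  haveI : Module.Finite k (k ⊗[O] A) := inferInstance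
  have hcard : n ≤ Module.finrank k
      ((Ideal.jacobson (⊥ : Ideal (k ⊗[O] A))).restrictScalars k) := by
    let u : Fin n → ((Ideal.jacobson (⊥ : Ideal (k ⊗[O] A))).restrictScalars k) :=
      fun j => ⟨iC (bN j : A), hmemC j⟩
    have hu : LinearIndependent k u :=
      LinearIndependent.of_comp (Submodule.subtype _) hind
    simpa using hu.fintype_card_le_finrank
  -- B side: common denominators
  have hden : ∀ x : K ⊗[O] A, ∃ (c : O) (a0 : A), c ≠ 0 ∧ c • x = iB a0 := by
    intro x
    induction x with
    | zero => exact ⟨1, 0, one_ne_zero, by simp⟩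
    | tmul t a0 =>
      obtain ⟨⟨c, hc⟩, d, hd⟩ := IsLocalization.exists_integer_multiple (nonZeroDivisors O) t
      refine ⟨c, d • a0, mem_nonZeroDivisors_iff_ne_zero.mp hc, ?_⟩
      have h1 : c • (t ⊗ₜ[O] a0) = (algebraMap O K d) ⊗ₜ[O] a0 := by
        rw [smul_tmul', hd]
      rw [h1]
      show (algebraMap O K d) ⊗ₜ[O] a0 = (1 : K) ⊗ₜ[O] (d • a0)
      rw [tmul_smul, smul_tmul', Algebra.algebraMap_eq_smul_one]
    | add x y hx hy =>
      obtain ⟨c1, a1, hc1, h1⟩ := hx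
      obtain ⟨c2, a2, hc2, h2⟩ := hy
      refine ⟨c1 * c2, c2 • a1 + c1 • a2, mul_ne_zero hc1 hc2, ?_⟩
      rw [smul_add, map_add, map_smul, map_smul, ← h1, ← h2]
      rw [show (c1 * c2) • x = c2 • (c1 • x) by rw [mul_comm, mul_smul]]
      rw [show (c1 * c2) • y = c1 • (c2 • y) by rw [mul_smul]]
  -- B side: Jacobson radical is contained in the span of the images of bN
  have hBle : (Ideal.jacobson (⊥ : Ideal (K ⊗[O] A))).restrictScalars K ≤
      Submodule.span K (Set.range fun j : Fin n => iB (bN j : A)) := by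
    intro x hx
    obtain ⟨c, a0, hc, hca⟩ := hden x
    have ht : algebraMap O K c ≠ 0 := fun h =>
      hc (IsFractionRing.injective O K (by rw [h, map_zero]))
    have hmem : a0 ∈ J₀ := by
      rw [hJ0, ← hca]
      rw [show c • x = algebraMap K (K ⊗[O] A) (algebraMap O K c) * x by
        rw [← Algebra.smul_def, algebraMap_smul]]
      exact Ideal.mul_mem_left _ _ hx
    have h3 : a0 ∈ Submodule.span O (Set.range fun j => (bN j : A)) := by
      rw [hspan]; exact hmem
    have h2 : iB a0 ∈ Submodule.span K (Set.range fun j : Fin n => iB (bN j : A)) := by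
      refine Submodule.span_induction ?_ ?_ ?_ ?_ h3
      · rintro y ⟨j, rfl⟩
        exact Submodule.subset_span ⟨j, rfl⟩
      · rw [map_zero]; exact Submodule.zero_mem _
      · intro y z _ _ hy hz
        rw [map_add]; exact Submodule.add_mem _ hy hz
      · intro c0 y _ hy
        rw [map_smul, ← algebraMap_smul K c0 (iB y)]
        exact Submodule.smul_mem _ _ hy
    have hx2 : x = (algebraMap O K c)⁻¹ • (c • x) := by
      rw [← algebraMap_smul K c x, smul_smul, inv_mul_cancel₀ ht, one_smul]
    rw [hx2, hca]
    exact Submodule.smul_mem _ _ h2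
  -- B side: dimension bound
  have hfinB : Module.finrank K
      ((Ideal.jacobson (⊥ : Ideal (K ⊗[O] A))).restrictScalars K) ≤ n := by
    refine le_trans (Submodule.finrank_mono hBle) ?_
    have := finrank_range_le_card (R := K) (fun j : Fin n => iB (bN j : A))
    simpa [Set.finrank] using this
  exact le_trans hfinB hcard


/-- Let `O` be a DVR with maximal ideal `m`, residue field `k = O/m` and
fraction field `K`, and let `A` be a finite free `O`-algebra whose special fibre
`A(m) = k ⊗[O] A` is split.  Then `dim_k Jac(A(m)) ≥ dim_K Jac(A^K)`. -/
theorem jacobson_dim_special_fiber_ge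
    (O : Type) [CommRing O] [IsDomain O] [IsDiscreteValuationRing O]
    (K : Type) [Field K] [Algebra O K] [IsFractionRing O K]
    (A : Type) [Ring A] [Algebra O A] [Module.Free O A] [Module.Finite O A]
    (hsplit : IsSplit (O ⧸ IsLocalRing.maximalIdeal O)
        ((O ⧸ IsLocalRing.maximalIdeal O) ⊗[O] A)) :
    Module.finrank (O ⧸ IsLocalRing.maximalIdeal O)
        ((Ideal.jacobson (⊥ : Ideal ((O ⧸ IsLocalRing.maximalIdeal O) ⊗[O] A))).restrictScalars
          (O ⧸ IsLocalRing.maximalIdeal O)) ≥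
      Module.finrank K ((Ideal.jacobson (⊥ : Ideal (K ⊗[O] A))).restrictScalars K) := by
  letI : Field (O ⧸ IsLocalRing.maximalIdeal O) := Ideal.Quotient.field _
  refine ge_iff_le.mpr (aux_main O K (O ⧸ IsLocalRing.maximalIdeal O) ?_ A)
  rw [Ideal.Quotient.algebraMap_eq]
  exact Ideal.Quotient.mk_surjective
end

section
/- Let R be a noetherian ring and X = Spec(R). Suppose for every irreducible closed subset Z of X (with generic point ξ) we are given an open subset U(ξ) of Z containing ξ. Then there exist finitely many points ξ₁,…,ξ_n ∈ X such that X = U(ξ₁) ∪ … ∪ U(ξ_n), and each U(ξᵢ) is locally closed in X. -/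
open TopologicalSpace

lemma aux_cover {X : Type} [TopologicalSpace X] [NoetherianSpace X] [QuasiSober X]
    (U : X → Set X) (hmem : ∀ ξ, ξ ∈ U ξ)
    (hopen : ∀ ξ, ∃ V : Set X, IsOpen V ∧ U ξ = closure {ξ} ∩ V) :
    ∀ Z : Closeds X, ∃ S : Set X, S.Finite ∧ (Z : Set X) ⊆ ⋃ ξ ∈ S, U ξ := by
  intro Z
  apply wellFounded_lt.induction Z; clear Z
  intro Z IH
  obtain ⟨T, hTfin, hTcl, hTirr, hTU⟩ :=
    NoetherianSpace.exists_finite_set_isClosed_irreducible Z.2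
  have hTU' : (Z : Set X) = ⋃₀ T := hTU
  -- For each irreducible closed t ∈ T, get a generic point and cover it.
  have key : ∀ t ∈ T, ∃ S : Set X, S.Finite ∧ t ⊆ ⋃ ξ ∈ S, U ξ := by
    intro t ht
    have hirr := hTirr t ht
    have hcl := hTcl t ht
    set ξ := hirr.genericPoint with hξ
    have hgen : closure ({ξ} : Set X) = t := hirr.closure_genericPoint hcl
    obtain ⟨V, hV, hUV⟩ := hopen ξ
    have hξmem : ξ ∈ t := by
      rw [← hgen]; exact subset_closure rfl
    have hξV : ξ ∈ V := by
      have := hmem ξ; rw [hUV] at this; exact this.2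
    -- Z' = t \ V is closed, strictly smaller than Z
    have htZ : t ⊆ (Z : Set X) := by
      rw [hTU']; exact Set.subset_sUnion_of_mem ht
    have hlt : (⟨t \ V, hcl.sdiff hV⟩ : Closeds X) < Z := by
      refine lt_of_le_of_ne (fun x hx => htZ hx.1) ?_
      intro h
      have : ξ ∈ (⟨t \ V, hcl.sdiff hV⟩ : Closeds X) := by rw [h]; exact htZ hξmem
      exact this.2 hξV
    obtain ⟨S, hSfin, hS⟩ := IH _ hlt
    refine ⟨insert ξ S, hSfin.insert ξ, fun x hx => ?_⟩
    by_cases hxV : x ∈ V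
    · refine Set.mem_biUnion (Set.mem_insert _ _) ?_
      rw [hUV, hgen]; exact ⟨hx, hxV⟩
    · have hx' : x ∈ ⋃ ξ ∈ S, U ξ := hS ⟨hx, hxV⟩
      obtain ⟨s, hs, hxs⟩ := Set.mem_iUnion₂.mp hx'
      exact Set.mem_biUnion (Set.mem_insert_of_mem _ hs) hxs
  choose f hf using key
  refine ⟨⋃ t ∈ T, f t ‹_›, ?_, ?_⟩
  · exact hTfin.biUnion' fun t ht => (hf t ht).1
  · intro x hx
    rw [hTU'] at hx
    obtain ⟨t, ht, hxt⟩ := hx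
    have hx' := (hf t ht).2 hxt
    obtain ⟨s, hs, hxs⟩ := Set.mem_iUnion₂.mp hx'
    exact Set.mem_biUnion (Set.mem_iUnion.mpr ⟨t, Set.mem_iUnion.mpr ⟨ht, hs⟩⟩) hxs

/-- Let `R` be a noetherian ring and `X = Spec R`.  Suppose that to each
point `ξ` of `X` (the generic point of the irreducible closed subset `Z = closure {ξ}`)
we assign a subset `U ξ` of `Z`, open in `Z` and containing `ξ`.  Then finitely many of
the `U ξᵢ` cover `X`, and each `U ξᵢ` is locally closed in `X`. -/
theorem finite_stratification_by_generic_opens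
    (R : Type) [CommRing R] [IsNoetherianRing R]
    (U : PrimeSpectrum R → Set (PrimeSpectrum R))
    (hmem : ∀ ξ, ξ ∈ U ξ)
    (hopen : ∀ ξ, ∃ V : Set (PrimeSpectrum R), IsOpen V ∧ U ξ = closure {ξ} ∩ V) :
    ∃ (n : ℕ) (ξ : Fin n → PrimeSpectrum R),
      (⋃ i, U (ξ i)) = Set.univ ∧ ∀ i, IsLocallyClosed (U (ξ i)) := by
  obtain ⟨S, hSfin, hS⟩ := aux_cover U hmem hopen ⊤
  obtain ⟨n, e⟩ := hSfin.fin_embedding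
  obtain ⟨e, rfl⟩ := e
  refine ⟨n, fun i => e i, ?_, ?_⟩
  · refine Set.eq_univ_of_univ_subset fun x _ => ?_
    have hx' := hS (by trivial : x ∈ ((⊤ : Closeds (PrimeSpectrum R)) : Set (PrimeSpectrum R)))
    obtain ⟨s, hs, hxs⟩ := Set.mem_iUnion₂.mp hx'
    obtain ⟨i, rfl⟩ := hs
    exact Set.mem_iUnion.mpr ⟨i, hxs⟩
  · intro i
    obtain ⟨V, hV, hUV⟩ := hopen (e i)
    exact ⟨V, closure {e i}, hV, isClosed_closure, by rw [hUV, Set.inter_comm]⟩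
end
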